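/- Let A be a linear map between n-dimensional real inner product spaces with singular values λ_1 ≤ λ_2 ≤ ... ≤ λ_n. Then the operator norm of the induced map Λ^k A on k-th exterior powers equals λ_{n-k+1} λ_{n-k+2} ⋯ λ_n, the product of the k largest singular values. -/

import Mathlib

/-- The multiset of singular values of a real square matrix `A`. -/
noncomputable def singularValues {n : ℕ} (A : Matrix (Fin n) (Fin n) ℝ) : Multiset ℝ :=
  (Finset.univ.val : Multiset (Fin n)).map fun i =>
    Real.sqrt ((Matrix.isHermitian_conjTranspose_mul_self A).eigenvalues i)

/-- The `k`-th compound matrix of `A`, i.e. the matrix of the induced map `Λ^k A` on the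
`k`-th exterior power, in the orthonormal basis of increasing wedges of standard basis
vectors: its entries are the `k×k` minors of `A`. -/
noncomputable def compound {n : ℕ} (k : ℕ) (A : Matrix (Fin n) (Fin n) ℝ) :
    Matrix {s : Finset (Fin n) // s.card = k} {s : Finset (Fin n) // s.card = k} ℝ :=
  fun s t => (A.submatrix (fun i => ((s.1.orderIsoOfFin s.2) i : Fin n))
    (fun j => ((t.1.orderIsoOfFin t.2) j : Fin n))).det

section Auxiliary

open Finset Equiv Matrix

/-- Auxiliary: the subsets of `Fin n` of cardinality `k`. -/
abbrev SubsetsCard (n k : ℕ) := {s : Finset (Fin n) // s.card = k}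

noncomputable def emb {n k : ℕ} (s : SubsetsCard n k) : Fin k → Fin n :=
  fun i => (s.1.orderIsoOfFin s.2 i : Fin n)

lemma emb_strictMono {n k : ℕ} (s : SubsetsCard n k) : StrictMono (emb s) :=
  fun _ _ h => (s.1.orderEmbOfFin s.2).strictMono h

lemma emb_mem {n k : ℕ} (s : SubsetsCard n k) (i : Fin k) : emb s i ∈ s.1 :=
  (s.1.orderIsoOfFin s.2 i).2

lemma image_emb {n k : ℕ} (s : SubsetsCard n k) : Finset.image (emb s) univ = s.1 := by
  apply Finset.eq_of_subset_of_card_le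
  · intro x hx
    rcases Finset.mem_image.1 hx with ⟨i, _, rfl⟩
    exact emb_mem s i
  · rw [s.2, Finset.card_image_of_injective _ (emb_strictMono s).injective, card_univ,
      Fintype.card_fin]

set_option maxHeartbeats 1000000 in
theorem cauchyBinet {k n : ℕ} (M : Matrix (Fin k) (Fin n) ℝ) (N : Matrix (Fin n) (Fin k) ℝ) :
    (M * N).det = ∑ s : SubsetsCard n k,
      (M.submatrix id (emb s)).det * (N.submatrix (emb s) id).det := by
  have step1 : (M * N).det
      = ∑ f : Fin k → Fin n, (M.submatrix id f).det * ∏ i, N (f i) i := by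
    calc (M * N).det
        = ∑ σ : Perm (Fin k), ((Perm.sign σ : ℤ) : ℝ) * ∏ i, ∑ j, M (σ i) j * N j i := by
          simp only [det_apply', mul_apply]
      _ = ∑ σ : Perm (Fin k), ∑ f : Fin k → Fin n,
            ((Perm.sign σ : ℤ) : ℝ) * ∏ i, M (σ i) (f i) * N (f i) i := by
          simp only [prod_univ_sum, Fintype.piFinset_univ, mul_sum]
      _ = ∑ f : Fin k → Fin n, ∑ σ : Perm (Fin k),
            ((Perm.sign σ : ℤ) : ℝ) * ∏ i, M (σ i) (f i) * N (f i) i := Finset.sum_comm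
      _ = ∑ f : Fin k → Fin n, (M.submatrix id f).det * ∏ i, N (f i) i := by
          refine Finset.sum_congr rfl fun f _ => ?_
          rw [det_apply', Finset.sum_mul]
          refine Finset.sum_congr rfl fun σ _ => ?_
          simp only [submatrix_apply, id_eq, prod_mul_distrib]
          ring
  have hzero : ∀ f : Fin k → Fin n, ¬ Function.Injective f →
      (M.submatrix id f).det * ∏ i, N (f i) i = 0 := by
    intro f hf
    rw [Function.not_injective_iff] at hf
    obtain ⟨i, j, hfij, hij⟩ := hf
    rw [Matrix.det_zero_of_column_eq hij (by simp [hfij]), zero_mul]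
  rw [step1, ← Finset.sum_filter_of_ne (p := fun f => Function.Injective f)
    (fun f _ h => by by_contra hinj; exact h (hzero f hinj))]
  have step2 : ∀ s : SubsetsCard n k,
      (M.submatrix id (emb s)).det * (N.submatrix (emb s) id).det
      = ∑ σ : Perm (Fin k),
          (M.submatrix id (emb s ∘ σ)).det * ∏ i, N ((emb s ∘ σ) i) i := by
    intro s
    rw [det_apply' (N.submatrix (emb s) id), Finset.mul_sum]
    refine Finset.sum_congr rfl fun σ _ => ?_
    have : M.submatrix id (emb s ∘ σ) = (M.submatrix id (emb s)).submatrix id σ := by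
      ext i j; simp
    rw [this, Matrix.det_permute']
    simp only [submatrix_apply, id_eq, Function.comp_apply]
    ring
  simp_rw [step2]
  have main : ∑ p : SubsetsCard n k × Perm (Fin k),
      (M.submatrix id (emb p.1 ∘ p.2)).det * ∏ i, N ((emb p.1 ∘ p.2) i) i
      = ∑ f ∈ filter (fun f => Function.Injective f) univ,
          (M.submatrix id f).det * ∏ i, N (f i) i := by
    refine Finset.sum_bij (fun p _ => emb p.1 ∘ p.2) ?_ ?_ ?_ ?_
    · intro p _
      simp only [Finset.mem_filter, Finset.mem_univ, true_and]
      exact (emb_strictMono p.1).injective.comp p.2.injective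
    · intro p _ q _ h
      have h' : emb p.1 ∘ ⇑p.2 = emb q.1 ∘ ⇑q.2 := h
      have key : ∀ r : SubsetsCard n k, ∀ σ : Perm (Fin k),
          Finset.image (emb r ∘ ⇑σ) univ = r.1 := by
        intro r σ
        calc Finset.image (emb r ∘ ⇑σ) univ
            = Finset.image (emb r) (Finset.image (⇑σ) univ) := (Finset.image_image).symm
          _ = Finset.image (emb r) univ := by rw [Finset.image_univ_equiv]
          _ = r.1 := image_emb r
      have himg : p.1 = q.1 := by
        apply Subtype.ext
        rw [← key p.1 p.2, ← key q.1 q.2, h']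
      obtain ⟨p1, p2⟩ := p; obtain ⟨q1, q2⟩ := q
      cases himg
      have hpq : p2 = q2 := by
        apply Equiv.coe_fn_injective
        funext i
        exact (emb_strictMono p1).injective (congrFun h' i)
      rw [hpq]
    · intro f hf
      simp only [Finset.mem_filter, Finset.mem_univ, true_and] at hf
      set s : SubsetsCard n k := ⟨Finset.image f univ, by
        rw [Finset.card_image_of_injective _ hf, card_univ, Fintype.card_fin]⟩ with hs
      have hmem : ∀ i, f i ∈ s.1 := fun i => Finset.mem_image_of_mem f (mem_univ i)
      have ginj : Function.Injective (fun i => (s.1.orderIsoOfFin s.2).symm ⟨f i, hmem i⟩) := by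
        intro i j h
        apply hf
        have := congrArg (fun x => ((s.1.orderIsoOfFin s.2) x : Fin n)) h
        simpa using this
      refine ⟨(s, Equiv.ofBijective _ (Finite.injective_iff_bijective.mp ginj)), mem_univ _, ?_⟩
      funext i
      simp [emb, Equiv.ofBijective_apply]
    · intro p _; rfl
  rw [← main]
  exact Fintype.sum_prod_type
    (f := fun p : SubsetsCard n k × Perm (Fin k) =>
      (M.submatrix id (emb p.1 ∘ ⇑p.2)).det * ∏ i, N ((emb p.1 ∘ ⇑p.2) i) i)

lemma compound_apply {n k : ℕ} (A : Matrix (Fin n) (Fin n) ℝ) (s t : SubsetsCard n k) :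
    compound k A s t = (A.submatrix (emb s) (emb t)).det := rfl

theorem compound_mul {n k : ℕ} (A B : Matrix (Fin n) (Fin n) ℝ) :
    compound k (A * B) = compound k A * compound k B := by
  ext s t
  rw [compound_apply, mul_apply]
  have : (A * B).submatrix (emb s) (emb t)
      = (A.submatrix (emb s) id) * (B.submatrix id (emb t)) := by
    ext i j
    simp [mul_apply]
  rw [this, cauchyBinet]
  refine Finset.sum_congr rfl fun u _ => ?_
  rw [compound_apply, compound_apply]
  congr 1

theorem compound_transpose {n k : ℕ} (A : Matrix (Fin n) (Fin n) ℝ) :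
    compound k Aᵀ = (compound k A)ᵀ := by
  ext s t
  rw [transpose_apply, compound_apply, compound_apply, ← transpose_submatrix, det_transpose]

theorem compound_star {n k : ℕ} (A : Matrix (Fin n) (Fin n) ℝ) :
    compound k (star A) = star (compound k A) := by
  rw [star_eq_conjTranspose, star_eq_conjTranspose, conjTranspose_eq_transpose_of_trivial,
    conjTranspose_eq_transpose_of_trivial, compound_transpose]

theorem det_submatrix_diagonal_ne {n k : ℕ} (d : Fin n → ℝ) {s t : SubsetsCard n k}
    (hst : s ≠ t) : ((diagonal d).submatrix (emb s) (emb t)).det = 0 := by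
  have hex : ∃ x ∈ s.1, x ∉ t.1 := by
    by_contra hc
    push_neg at hc
    exact hst (Subtype.ext (Finset.eq_of_subset_of_card_le hc (by rw [s.2, t.2])))
  obtain ⟨x, hxs, hxt⟩ := hex
  rw [← image_emb s] at hxs
  obtain ⟨i, _, rfl⟩ := Finset.mem_image.1 hxs
  apply det_eq_zero_of_row_eq_zero i
  intro j
  rw [submatrix_apply, diagonal_apply_ne]
  intro hc
  exact hxt (hc ▸ emb_mem t j)

theorem compound_diagonal {n k : ℕ} (d : Fin n → ℝ) :
    compound k (diagonal d) = diagonal (fun s : SubsetsCard n k => ∏ i ∈ s.1, d i) := by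
  ext s t
  rcases eq_or_ne s t with rfl | hst
  · rw [compound_apply, diagonal_apply_eq]
    have : (diagonal d).submatrix (emb s) (emb s) = diagonal (fun i => d (emb s i)) := by
      ext i j
      rcases eq_or_ne i j with rfl | hij
      · simp
      · rw [submatrix_apply, diagonal_apply_ne _ hij,
          diagonal_apply_ne _ (fun hc => hij ((emb_strictMono s).injective hc))]
    rw [this, det_diagonal, ← image_emb s,
      Finset.prod_image (fun a _ b _ h => (emb_strictMono s).injective h)]
  · rw [compound_apply, diagonal_apply_ne _ hst, det_submatrix_diagonal_ne d hst]

theorem compound_one {n k : ℕ} : compound k (1 : Matrix (Fin n) (Fin n) ℝ) = 1 := by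
  rw [← diagonal_one, compound_diagonal]
  simp

theorem norm_toEuclideanCLM_diagonal {ι : Type*} [Fintype ι] [DecidableEq ι] [Nonempty ι]
    (d : ι → ℝ) (hd : ∀ i, 0 ≤ d i) :
    ‖Matrix.toEuclideanCLM (𝕜 := ℝ) (diagonal d)‖ = univ.sup' univ_nonempty d := by
  set c := univ.sup' univ_nonempty d with hc
  have hc0 : 0 ≤ c := le_trans (hd (Classical.arbitrary ι)) (Finset.le_sup' d (mem_univ _))
  refine le_antisymm (ContinuousLinearMap.opNorm_le_bound _ hc0 fun x => ?_) ?_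
  · have hx : (Matrix.toEuclideanCLM (𝕜 := ℝ) (diagonal d)) x
        = (WithLp.equiv 2 (ι → ℝ)).symm (diagonal d *ᵥ (WithLp.equiv 2 (ι → ℝ) x)) := by
      have := Matrix.toEuclideanCLM_toLp (𝕜 := ℝ) (diagonal d)
        ((WithLp.equiv 2 (ι → ℝ)) x)
      simpa using this
    rw [hx]
    rw [EuclideanSpace.norm_eq, EuclideanSpace.norm_eq]
    rw [← Real.sqrt_sq hc0, ← Real.sqrt_mul (sq_nonneg c)]
    apply Real.sqrt_le_sqrt
    rw [Finset.mul_sum]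
    apply Finset.sum_le_sum
    intro i _
    have : (WithLp.equiv 2 (ι → ℝ)).symm (diagonal d *ᵥ (WithLp.equiv 2 (ι → ℝ) x)) i
        = d i * x i := by
      simp [mulVec_diagonal]
    rw [this, norm_mul, mul_pow]
    have h1 : ‖d i‖ ≤ c := by
      rw [Real.norm_eq_abs, abs_of_nonneg (hd i)]; exact Finset.le_sup' d (mem_univ i)
    exact mul_le_mul_of_nonneg_right (pow_le_pow_left₀ (norm_nonneg _) h1 2) (sq_nonneg _)
  · apply Finset.sup'_le
    intro i _
    have h1 : (Matrix.toEuclideanCLM (𝕜 := ℝ) (diagonal d)) (EuclideanSpace.single i 1)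
        = EuclideanSpace.single i (d i) := by
      apply (WithLp.equiv 2 (ι → ℝ)).injective
      rw [WithLp.equiv_apply, Matrix.ofLp_toEuclideanCLM, ← Matrix.toLin'_apply]
      funext j
      rw [Matrix.toLin'_apply, mulVec_diagonal]
      rcases eq_or_ne j i with rfl | hji
      · simp
      · simp [hji]
    have h2 := (Matrix.toEuclideanCLM (𝕜 := ℝ) (diagonal d)).le_opNorm
      (EuclideanSpace.single i 1)
    rw [h1, EuclideanSpace.norm_single, EuclideanSpace.norm_single] at h2
    simpa [abs_of_nonneg (hd i)] using h2

theorem norm_unitary_conj {E : Type*} [NormedRing E] [StarRing E] [CStarRing E]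
    {u : E} (hu : u ∈ unitary E) (a : E) : ‖u * a * star u‖ = ‖a‖ := by
  rw [mul_assoc, CStarRing.norm_mem_unitary_mul _ hu,
    CStarRing.norm_mul_mem_unitary _ (Unitary.star_mem hu)]

lemma multiset_map_univ_eq_ofFn {n : ℕ} (f : Fin n → ℝ) :
    (Finset.univ.val.map f : Multiset ℝ) = (List.ofFn f : List ℝ) := by
  rw [Fin.univ_def]
  simp [List.ofFn_eq_map]

lemma exists_perm_of_multiset_eq {n : ℕ} (f g : Fin n → ℝ)
    (h : (Finset.univ.val.map f : Multiset ℝ) = Finset.univ.val.map g)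
    (hg : Monotone g) : ∃ σ : Equiv.Perm (Fin n), ∀ i, g i = f (σ i) := by
  rw [multiset_map_univ_eq_ofFn, multiset_map_univ_eq_ofFn, Multiset.coe_eq_coe] at h
  have h2 : (Finset.univ.val.map (⇑(Tuple.sort f)) : Multiset (Fin n)) = Finset.univ.val := by
    have h3 := congrArg Finset.val (Finset.map_univ_equiv (Tuple.sort f))
    rwa [Finset.map_val] at h3
  have hperm : (List.ofFn (f ∘ ⇑(Tuple.sort f))).Perm (List.ofFn g) := by
    refine List.Perm.trans ?_ h
    rw [← Multiset.coe_eq_coe, ← multiset_map_univ_eq_ofFn, ← multiset_map_univ_eq_ofFn]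
    calc (Finset.univ.val.map (f ∘ ⇑(Tuple.sort f)) : Multiset ℝ)
        = (Finset.univ.val.map (⇑(Tuple.sort f))).map f := (Multiset.map_map f _ _).symm
      _ = Finset.univ.val.map f := by rw [h2]
  have heq : List.ofFn (f ∘ ⇑(Tuple.sort f)) = List.ofFn g :=
    List.Perm.eq_of_sortedLE
      (List.sortedLE_ofFn_iff.mpr (Tuple.monotone_sort f))
      (List.sortedLE_ofFn_iff.mpr hg) hperm
  have heq2 := List.ofFn_injective heq
  exact ⟨Tuple.sort f, fun i => (congrFun heq2 i).symm⟩

lemma strictMono_le_bound {k n : ℕ} {f : Fin k → Fin n} (hf : StrictMono f) (j : Fin k) :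
    (f j : ℕ) ≤ n - k + j := by
  have key : ∀ m : ℕ, ∀ h : (j : ℕ) + m < k, (f j : ℕ) + m ≤ f ⟨(j : ℕ) + m, h⟩ := by
    intro m
    induction m with
    | zero => intro h; simp
    | succ m ih =>
      intro h
      have h' : (j : ℕ) + m < k := by omega
      have h1 := ih h'
      have h2 : (f ⟨(j : ℕ) + m, h'⟩ : ℕ) < (f ⟨(j : ℕ) + (m + 1), h⟩ : ℕ) := by
        apply hf
        rw [Fin.mk_lt_mk]
        omega
      omega
  have hj : (j : ℕ) < k := j.2
  have hlast : (j : ℕ) + (k - 1 - (j : ℕ)) < k := by omega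
  have hb := key (k - 1 - (j : ℕ)) hlast
  have hfn : (f ⟨(j : ℕ) + (k - 1 - (j : ℕ)), hlast⟩ : ℕ) < n := (f _).2
  omega

def topSet (n k : ℕ) : Finset (Fin n) := univ.filter (fun i : Fin n => n - k ≤ (i : ℕ))

lemma image_topFun {n k : ℕ} (hk : k ≤ n) : Finset.image
    (fun j : Fin k => (⟨n - k + (j : ℕ), by have := j.2; omega⟩ : Fin n)) univ
      = topSet n k := by
  apply Finset.Subset.antisymm
  · intro x hx
    rcases Finset.mem_image.1 hx with ⟨j, _, rfl⟩
    simp only [topSet, Finset.mem_filter, Finset.mem_univ, true_and]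
    omega
  · intro x hx
    simp only [topSet, Finset.mem_filter] at hx
    have hxn : (x : ℕ) < n := x.2
    refine Finset.mem_image.2 ⟨⟨(x : ℕ) - (n - k), by omega⟩, mem_univ _, ?_⟩
    apply Fin.ext
    simp only
    omega

lemma card_topSet {n k : ℕ} (hk : k ≤ n) : (topSet n k).card = k := by
  rw [← image_topFun hk, Finset.card_image_of_injective, card_univ, Fintype.card_fin]
  intro a b hab
  apply Fin.ext
  have := congrArg Fin.val hab
  simp only at this
  omega

lemma emb_topSet {n k : ℕ} (hk : k ≤ n) (j : Fin k) :
    (emb (⟨topSet n k, card_topSet hk⟩ : SubsetsCard n k) j : ℕ) = n - k + j := by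
  have hmono : StrictMono (fun j : Fin k =>
      (⟨n - k + (j : ℕ), by have := j.2; omega⟩ : Fin n)) := by
    intro a b hab
    rw [Fin.lt_def]
    simpa using hab
  have huniq := Finset.orderEmbOfFin_unique (f := fun j : Fin k =>
      (⟨n - k + (j : ℕ), by have := j.2; omega⟩ : Fin n)) (card_topSet hk)
    (fun j => by rw [← image_topFun hk]; exact Finset.mem_image_of_mem _ (mem_univ j)) hmono
  have hj := congrFun huniq.symm j
  simpa [emb] using congrArg Fin.val hj

lemma prod_subset_eq_prod_emb {n k : ℕ} (w : Fin n → ℝ) (s : SubsetsCard n k) :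
    ∏ i ∈ s.1, w i = ∏ j : Fin k, w (emb s j) := by
  rw [← image_emb s, Finset.prod_image (fun a _ b _ h => (emb_strictMono s).injective h)]

lemma sup'_prod_subsets {n k : ℕ} (hk : k ≤ n) (w : Fin n → ℝ)
    (hw0 : ∀ i, 0 ≤ w i) (hw : Monotone w) :
    (univ : Finset (SubsetsCard n k)).sup'
        ⟨⟨topSet n k, card_topSet hk⟩, mem_univ _⟩ (fun s => ∏ i ∈ s.1, w i)
      = ∏ i ∈ topSet n k, w i := by
  apply le_antisymm
  · apply Finset.sup'_le
    intro s _
    rw [prod_subset_eq_prod_emb w s,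
      prod_subset_eq_prod_emb w (⟨topSet n k, card_topSet hk⟩ : SubsetsCard n k)]
    apply Finset.prod_le_prod (fun j _ => hw0 _)
    intro j _
    apply hw
    rw [Fin.le_def, emb_topSet hk j]
    exact strictMono_le_bound (emb_strictMono s) j
  · exact Finset.le_sup' (fun s : SubsetsCard n k => ∏ i ∈ s.1, w i)
      (mem_univ (⟨topSet n k, card_topSet hk⟩ : SubsetsCard n k))

end Auxiliary

open Finset Matrix

/-- If `A` has singular values `λ_1 ≤ ⋯ ≤ λ_n`, then the operator norm of `Λ^k A`
equals the product `λ_{n-k+1} ⋯ λ_n` of the `k` largest singular values. -/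
theorem opNorm_exteriorPower_map {n k : ℕ} (hk : k ≤ n) (A : Matrix (Fin n) (Fin n) ℝ)
    (l : Fin n → ℝ) (hmono : Monotone l)
    (hsv : singularValues A = (Finset.univ.val : Multiset (Fin n)).map l) :
    ‖Matrix.toEuclideanCLM (𝕜 := ℝ) (compound k A)‖ =
      ∏ i ∈ Finset.univ.filter (fun i : Fin n => n - k ≤ (i : ℕ)), l i := by
  haveI : Nonempty (SubsetsCard n k) := ⟨⟨topSet n k, card_topSet hk⟩⟩
  set hH := Matrix.isHermitian_conjTranspose_mul_self A with hHdef
  set μ : Fin n → ℝ := hH.eigenvalues with hμdef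
  -- nonnegativity of eigenvalues
  have hPSD : (Aᴴ * A).PosSemidef := Matrix.posSemidef_conjTranspose_mul_self A
  have hμ0 : ∀ i, 0 ≤ μ i := fun i => hPSD.eigenvalues_nonneg i
  -- nonnegativity of l
  have hl0 : ∀ i, 0 ≤ l i := by
    intro i
    have hmem : l i ∈ (Finset.univ.val : Multiset (Fin n)).map l :=
      Multiset.mem_map_of_mem l (Finset.mem_univ_val i)
    rw [← hsv] at hmem
    obtain ⟨j, _, hj⟩ := Multiset.mem_map.1 hmem
    rw [← hj]
    exact Real.sqrt_nonneg _
  -- permutation relating l and the eigenvalues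
  obtain ⟨σ, hσ⟩ := exists_perm_of_multiset_eq (fun i => Real.sqrt (μ i)) l hsv hmono
  have hμσ : ∀ i, μ (σ i) = (l i) ^ 2 := by
    intro i
    rw [hσ i, Real.sq_sqrt (hμ0 _)]
  -- C*-algebra: ‖C‖² = ‖star C * C‖
  set C := Matrix.toEuclideanCLM (𝕜 := ℝ) (compound k A) with hCdef
  have hCsq : ‖C‖ * ‖C‖ = ‖star C * C‖ := (CStarRing.norm_star_mul_self).symm
  -- star C * C is the compound of AᵀA
  have hstar : star C * C = Matrix.toEuclideanCLM (𝕜 := ℝ) (compound k (Aᴴ * A)) := by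
    rw [hCdef, ← map_star, ← _root_.map_mul, ← compound_star, ← compound_mul,
      star_eq_conjTranspose]
  -- spectral theorem for AᵀA
  have hofReal : (RCLike.ofReal ∘ μ : Fin n → ℝ) = μ := funext fun i => rfl
  set U : Matrix (Fin n) (Fin n) ℝ := (hH.eigenvectorUnitary : Matrix (Fin n) (Fin n) ℝ)
    with hUdef
  have hspec : Aᴴ * A = U * Matrix.diagonal μ * star U := by
    conv_lhs => rw [hH.spectral_theorem]
    rw [hofReal, Unitary.conjStarAlgAut_apply]
  set V := compound k U with hVdef
  have hUstar : star U * U = 1 := Matrix.mem_unitaryGroup_iff'.mp hH.eigenvectorUnitary.2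
  have hUstar' : U * star U = 1 := Matrix.mem_unitaryGroup_iff.mp hH.eigenvectorUnitary.2
  have hVmem : Matrix.toEuclideanCLM (𝕜 := ℝ) V ∈
      unitary (EuclideanSpace ℝ (SubsetsCard n k) →L[ℝ] EuclideanSpace ℝ (SubsetsCard n k)) := by
    constructor
    · rw [← map_star, ← _root_.map_mul, hVdef, ← compound_star, ← compound_mul,
        hUstar, compound_one, _root_.map_one]
    · rw [← map_star, ← _root_.map_mul, hVdef, ← compound_star, ← compound_mul,
        hUstar', compound_one, _root_.map_one]
  have hcomp : compound k (Aᴴ * A)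
      = V * compound k (Matrix.diagonal μ) * star V := by
    rw [hspec, compound_mul, compound_mul, hVdef, compound_star]
  -- compute the norm of the diagonal part
  have hdiagnorm : ‖Matrix.toEuclideanCLM (𝕜 := ℝ) (compound k (Matrix.diagonal μ))‖
      = (univ : Finset (SubsetsCard n k)).sup'
          ⟨⟨topSet n k, card_topSet hk⟩, mem_univ _⟩ (fun s => ∏ i ∈ s.1, μ i) := by
    rw [compound_diagonal]
    exact norm_toEuclideanCLM_diagonal _ (fun s => Finset.prod_nonneg fun i _ => hμ0 i)
  have hnorm2 : ‖star C * C‖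
      = (univ : Finset (SubsetsCard n k)).sup'
          ⟨⟨topSet n k, card_topSet hk⟩, mem_univ _⟩ (fun s => ∏ i ∈ s.1, μ i) := by
    rw [hstar, hcomp, _root_.map_mul, _root_.map_mul, map_star,
      norm_unitary_conj hVmem, hdiagnorm]
  -- identify the sup of products with the top-k product
  set w : Fin n → ℝ := fun i => (l i) ^ 2 with hwdef
  have hw0 : ∀ i, 0 ≤ w i := fun i => sq_nonneg _
  have hwmono : Monotone w := fun i j hij => pow_le_pow_left₀ (hl0 i) (hmono hij) 2
  have hsupeq : (univ : Finset (SubsetsCard n k)).sup'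
        ⟨⟨topSet n k, card_topSet hk⟩, mem_univ _⟩ (fun s => ∏ i ∈ s.1, μ i)
      = (univ : Finset (SubsetsCard n k)).sup'
        ⟨⟨topSet n k, card_topSet hk⟩, mem_univ _⟩ (fun s => ∏ i ∈ s.1, w i) := by
    apply le_antisymm
    · apply Finset.sup'_le
      intro s _
      have hcard : (s.1.image ⇑σ.symm).card = k := by
        rw [Finset.card_image_of_injective _ σ.symm.injective, s.2]
      have : ∏ i ∈ s.1, μ i = ∏ i ∈ s.1.image ⇑σ.symm, w i := by
        rw [Finset.prod_image (fun a _ b _ h => σ.symm.injective h)]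
        refine Finset.prod_congr rfl fun i _ => ?_
        have : μ i = μ (σ (σ.symm i)) := by rw [Equiv.apply_symm_apply]
        rw [this, hμσ]
      rw [this]
      exact Finset.le_sup' (fun s : SubsetsCard n k => ∏ i ∈ s.1, w i)
        (mem_univ (⟨s.1.image ⇑σ.symm, hcard⟩ : SubsetsCard n k))
    · apply Finset.sup'_le
      intro s _
      have hcard : (s.1.image ⇑σ).card = k := by
        rw [Finset.card_image_of_injective _ σ.injective, s.2]
      have : ∏ i ∈ s.1, w i = ∏ i ∈ s.1.image ⇑σ, μ i := by
        rw [Finset.prod_image (fun a _ b _ h => σ.injective h)]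
        exact Finset.prod_congr rfl fun i _ => (hμσ i).symm
      rw [this]
      exact Finset.le_sup' (fun s : SubsetsCard n k => ∏ i ∈ s.1, μ i)
        (mem_univ (⟨s.1.image ⇑σ, hcard⟩ : SubsetsCard n k))
  have hfinal : ‖C‖ * ‖C‖ = (∏ i ∈ topSet n k, l i) * (∏ i ∈ topSet n k, l i) := by
    rw [hCsq, hnorm2, hsupeq, sup'_prod_subsets hk w hw0 hwmono, hwdef]
    rw [Finset.prod_pow]
    ring
  have hP0 : 0 ≤ ∏ i ∈ topSet n k, l i := Finset.prod_nonneg fun i _ => hl0 i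
  have : ‖C‖ = ∏ i ∈ topSet n k, l i := by
    have h1 : Real.sqrt (‖C‖ * ‖C‖) = ‖C‖ := Real.sqrt_mul_self (norm_nonneg _)
    have h2 : Real.sqrt ((∏ i ∈ topSet n k, l i) * (∏ i ∈ topSet n k, l i))
        = ∏ i ∈ topSet n k, l i := Real.sqrt_mul_self hP0
    rw [← h1, hfinal, h2]
  exact this
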